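/- There exist constants c_0 > 0 and c_1 > 0 such that for all integers n, N with 1 ≤ n ≤ c_0·N, every randomized algorithm using n function values for computing the scalar mean S_N on the unit ball B_∞^N(ℝ) has worst-case expected error at least c_1·n^{−1/2}; that is, for every finite probability space (Ω, P), every choice of sample points t_1^ω,…,t_n^ω ∈ {0,…,N−1} and arbitrary maps φ^ω : ℝ^n → ℝ (ω ∈ Ω), one has sup over f with |f(j)| ≤ 1 of E_ω | S_N f − φ^ω(f(t_1^ω),…,f(t_n^ω)) | ≥ c_1·n^{−1/2}. -/

import Mathlib

open Finset

section MCAux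

def rr : Bool → ℝ := fun b => cond b 1 (-1)

lemma rr_sq (b : Bool) : rr b * rr b = 1 := by cases b <;> simp [rr]
lemma rr_not (b : Bool) : rr (!b) = - rr b := by cases b <;> simp [rr]
lemma rr_cases (b : Bool) : rr b = 1 ∨ rr b = -1 := by cases b <;> simp [rr]
lemma rr_abs (b : Bool) : |rr b| ≤ 1 := by cases b <;> simp [rr]

lemma prod_update {m : ℕ} (L : List (Fin m)) (v : Fin m) (ε : Fin m → Bool) :
    (L.map fun x => rr (Function.update ε v (!(ε v)) x)).prod
      = (-1 : ℝ) ^ (L.count v) * (L.map fun x => rr (ε x)).prod := by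
  induction L with
  | nil => simp
  | cons a L ih =>
    by_cases h : a = v
    · subst h
      simp [List.count_cons, ih, Function.update_self, rr_not, pow_succ]
      ring
    · simp [List.count_cons, ih, Function.update_of_ne h, h]
      ring

lemma sum_prod_rr_eq_zero {m : ℕ} (L : List (Fin m)) (v : Fin m) (hv : Odd (L.count v)) :
    ∑ ε : Fin m → Bool, (L.map fun x => rr (ε x)).prod = 0 := by
  have hinv : Function.Involutive (fun ε : Fin m → Bool => Function.update ε v (!(ε v))) := by
    intro ε; funext x
    by_cases h : x = v
    · subst h; simp [Function.update_self]
    · simp [Function.update_of_ne h]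
  have h1 := Equiv.sum_comp (Function.Involutive.toPerm _ hinv) (fun ε : Fin m → Bool => (L.map fun x => rr (ε x)).prod)
  have h2 : ∀ ε : Fin m → Bool,
      (L.map fun x => rr ((Function.Involutive.toPerm _ hinv) ε x)).prod = - (L.map fun x => rr (ε x)).prod := by
    intro ε
    have : (Function.Involutive.toPerm _ hinv) ε = Function.update ε v (!(ε v)) := rfl
    rw [this, prod_update, hv.neg_one_pow]
    ring
  simp only [h2] at h1
  rw [Finset.sum_neg_distrib] at h1
  linarith

lemma card_eps (m : ℕ) : (Fintype.card (Fin m → Bool) : ℝ) = 2 ^ m := by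
  simp [Fintype.card_fun]

lemma sum_rr_pair {m : ℕ} (i j : Fin m) :
    ∑ ε : Fin m → Bool, rr (ε i) * rr (ε j) = if i = j then (2:ℝ)^m else 0 := by
  by_cases h : i = j
  · subst h
    simp only [rr_sq, if_pos rfl]
    rw [Finset.sum_const, card_univ]
    simp [Fintype.card_fun]
  · rw [if_neg h]
    have := sum_prod_rr_eq_zero [i, j] i (by
      have : List.count i [i, j] = 1 := by
        simp [List.count_cons, List.count_nil, Ne.symm h]
      rw [this]; exact odd_one)
    simpa using this

lemma sum_rr_quad_le {m : ℕ} (i j k l : Fin m) :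
    ∑ ε : Fin m → Bool, rr (ε i) * rr (ε j) * rr (ε k) * rr (ε l)
      ≤ (if i = j ∧ k = l then (2:ℝ)^m else 0) + (if i = k ∧ j = l then (2:ℝ)^m else 0)
        + (if i = l ∧ j = k then (2:ℝ)^m else 0) := by
  by_cases hp : (i = j ∧ k = l) ∨ (i = k ∧ j = l) ∨ (i = l ∧ j = k)
  · -- LHS ≤ 2^m ≤ RHS
    have hle : ∑ ε : Fin m → Bool, rr (ε i) * rr (ε j) * rr (ε k) * rr (ε l) ≤ (2:ℝ)^m := by
      calc ∑ ε : Fin m → Bool, rr (ε i) * rr (ε j) * rr (ε k) * rr (ε l)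
          ≤ ∑ _ε : Fin m → Bool, (1:ℝ) := by
            apply Finset.sum_le_sum
            intro ε _
            rcases rr_cases (ε i) with h1 | h1 <;> rcases rr_cases (ε j) with h2 | h2 <;>
              rcases rr_cases (ε k) with h3 | h3 <;> rcases rr_cases (ε l) with h4 | h4 <;>
              rw [h1, h2, h3, h4] <;> norm_num
        _ = (2:ℝ)^m := by rw [Finset.sum_const, card_univ]; simp [Fintype.card_fun]
    have h2m : (0:ℝ) ≤ (2:ℝ)^m := by positivity
    have e1 : (0:ℝ) ≤ (if i = j ∧ k = l then (2:ℝ)^m else 0) := by positivity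
    have e2 : (0:ℝ) ≤ (if i = k ∧ j = l then (2:ℝ)^m else 0) := by positivity
    have e3 : (0:ℝ) ≤ (if i = l ∧ j = k then (2:ℝ)^m else 0) := by positivity
    rcases hp with h | h | h
    · rw [if_pos h]; linarith
    · rw [if_pos h]; linarith
    · rw [if_pos h]; linarith
  · push_neg at hp
    obtain ⟨h1, h2, h3⟩ := hp
    have key : ∀ v : Fin m, Odd (List.count v [i,j,k,l]) →
        ∑ ε : Fin m → Bool, rr (ε i) * rr (ε j) * rr (ε k) * rr (ε l) = 0 := by
      intro v hv
      have := sum_prod_rr_eq_zero [i,j,k,l] v hv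
      simpa [mul_assoc] using this
    have hz : ∑ ε : Fin m → Bool, rr (ε i) * rr (ε j) * rr (ε k) * rr (ε l) = 0 := by
      by_cases hij : i = j
      · subst hij
        have hkl : k ≠ l := fun hc => h1 rfl hc
        apply key k
        by_cases hik : i = k
        · subst hik
          have : List.count i [i,i,i,l] = 3 := by
            simp [List.count_cons, Ne.symm hkl]
          rw [this]; exact ⟨1, by ring⟩
        · have : List.count k [i,i,k,l] = 1 := by
            simp [List.count_cons, hik, Ne.symm hik, Ne.symm hkl]
          rw [this]; exact odd_one
      · by_cases hik : i = k
        · subst hik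
          have hjl : j ≠ l := fun hc => h2 rfl hc
          apply key j
          have : List.count j [i,j,i,l] = 1 := by
            simp [List.count_cons, hij, Ne.symm hjl]
          rw [this]; exact odd_one
        · by_cases hil : i = l
          · subst hil
            have hjk : j ≠ k := fun hc => h3 rfl hc
            apply key j
            have : List.count j [i,j,k,i] = 1 := by
              simp [List.count_cons, hij, Ne.symm hjk]
            rw [this]; exact odd_one
          · apply key i
            have : List.count i [i,j,k,l] = 1 := by
              simp [List.count_cons, hij, hik, hil, Ne.symm hij, Ne.symm hik, Ne.symm hil]
            rw [this]; exact odd_one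
    rw [hz, if_neg (by tauto), if_neg (by tauto), if_neg (by tauto)]
    norm_num

lemma expand2 {m : ℕ} (B : Finset (Fin m)) (c : Fin m → ℝ) (ε : Fin m → Bool) :
    (∑ i ∈ B, c i * rr (ε i))^2
      = ∑ i ∈ B, ∑ j ∈ B, (c i * c j) * (rr (ε i) * rr (ε j)) := by
  rw [sq, Finset.sum_mul_sum]
  exact sum_congr rfl fun i _ => sum_congr rfl fun j _ => by ring

lemma moment2 {m : ℕ} (B : Finset (Fin m)) (c : Fin m → ℝ) :
    ∑ ε : Fin m → Bool, (∑ i ∈ B, c i * rr (ε i))^2 = 2^m * ∑ i ∈ B, (c i)^2 := by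
  simp_rw [expand2]
  rw [Finset.sum_comm]
  have : ∀ i ∈ B, (∑ ε : Fin m → Bool, ∑ j ∈ B, (c i * c j) * (rr (ε i) * rr (ε j)))
      = 2^m * (c i)^2 := by
    intro i hi
    rw [Finset.sum_comm]
    have : ∀ j ∈ B, (∑ ε : Fin m → Bool, (c i * c j) * (rr (ε i) * rr (ε j)))
        = if i = j then 2^m * (c i * c j) else 0 := by
      intro j _
      rw [← Finset.mul_sum, sum_rr_pair]
      by_cases h : i = j <;> simp [h] <;> ring
    rw [Finset.sum_congr rfl this, Finset.sum_ite_eq B i (fun j => 2^m * (c i * c j)),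
      if_pos hi, sq]
  rw [Finset.sum_congr rfl this, ← Finset.mul_sum]

lemma expand4 {m : ℕ} (B : Finset (Fin m)) (c : Fin m → ℝ) (ε : Fin m → Bool) :
    (∑ i ∈ B, c i * rr (ε i))^4
      = ∑ i ∈ B, ∑ j ∈ B, ∑ k ∈ B, ∑ l ∈ B,
          (c i * c j * c k * c l) * (rr (ε i) * rr (ε j) * rr (ε k) * rr (ε l)) := by
  have h4 : (∑ i ∈ B, c i * rr (ε i))^4
      = (∑ i ∈ B, ∑ j ∈ B, (c i * c j) * (rr (ε i) * rr (ε j)))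
        * (∑ k ∈ B, ∑ l ∈ B, (c k * c l) * (rr (ε k) * rr (ε l))) := by
    rw [show (4:ℕ) = 2 + 2 from rfl, pow_add, expand2]
  rw [h4, Finset.sum_mul_sum]
  refine sum_congr rfl fun i _ => ?_
  rw [Finset.sum_comm]
  refine sum_congr rfl fun k _ => ?_
  rw [Finset.sum_mul_sum]
  exact sum_congr rfl fun j _ => sum_congr rfl fun l _ => by ring

lemma moment4 {m : ℕ} (B : Finset (Fin m)) (c : Fin m → ℝ) (hc : ∀ i, 0 ≤ c i) :
    ∑ ε : Fin m → Bool, (∑ i ∈ B, c i * rr (ε i))^4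
      ≤ 3 * 2^m * (∑ i ∈ B, (c i)^2)^2 := by
  simp_rw [expand4]
  rw [Finset.sum_comm]
  have key : ∀ i ∈ B, (∑ ε : Fin m → Bool, ∑ j ∈ B, ∑ k ∈ B, ∑ l ∈ B,
        (c i * c j * c k * c l) * (rr (ε i) * rr (ε j) * rr (ε k) * rr (ε l)))
      ≤ ∑ j ∈ B, ∑ k ∈ B, ∑ l ∈ B, (c i * c j * c k * c l) *
          ((if i = j ∧ k = l then (2:ℝ)^m else 0) + (if i = k ∧ j = l then (2:ℝ)^m else 0)
            + (if i = l ∧ j = k then (2:ℝ)^m else 0)) := by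
    intro i _
    rw [Finset.sum_comm]
    refine Finset.sum_le_sum fun j _ => ?_
    rw [Finset.sum_comm]
    refine Finset.sum_le_sum fun k _ => ?_
    rw [Finset.sum_comm]
    refine Finset.sum_le_sum fun l _ => ?_
    rw [← Finset.mul_sum]
    exact mul_le_mul_of_nonneg_left (sum_rr_quad_le i j k l)
      (by have := hc i; have := hc j; have := hc k; have := hc l; positivity)
  refine le_trans (Finset.sum_le_sum key) ?_
  have hE1 : ∑ i ∈ B, ∑ j ∈ B, ∑ k ∈ B, ∑ l ∈ B,
      (c i*c j*c k*c l) * (if i = j ∧ k = l then (2:ℝ)^m else 0)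
      = 2^m * (∑ i ∈ B, (c i)^2)^2 := by
    have inner : ∀ i ∈ B, ∀ j ∈ B, (∑ k ∈ B, ∑ l ∈ B,
        (c i*c j*c k*c l) * (if i = j ∧ k = l then (2:ℝ)^m else 0))
        = if i = j then (c i * c j) * (2^m * ∑ k ∈ B, (c k)^2) else 0 := by
      intro i hi j hj
      by_cases hij : i = j
      · rw [if_pos hij]
        have hk : ∀ k ∈ B, (∑ l ∈ B,
            (c i*c j*c k*c l) * (if i = j ∧ k = l then (2:ℝ)^m else 0))
            = (c i * c j * 2^m) * (c k)^2 := by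
          intro k hk
          have hl : ∀ l, (c i*c j*c k*c l) * (if i = j ∧ k = l then (2:ℝ)^m else 0)
              = if k = l then (c i * c j * 2^m) * (c k * c l) else 0 := by
            intro l
            by_cases hkl : k = l <;> simp [hij, hkl] <;> ring
          rw [Finset.sum_congr rfl (fun l _ => hl l), Finset.sum_ite_eq B k _, if_pos hk, sq]
        rw [Finset.sum_congr rfl hk, ← Finset.mul_sum]
        ring
      · rw [if_neg hij]
        refine Finset.sum_eq_zero fun k _ => Finset.sum_eq_zero fun l _ => ?_
        simp [hij]
    rw [Finset.sum_congr rfl (fun i hi => Finset.sum_congr rfl (fun j hj => inner i hi j hj))]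
    have : ∀ i ∈ B, (∑ j ∈ B, if i = j then (c i * c j) * (2^m * ∑ k ∈ B, (c k)^2) else 0)
        = (c i)^2 * (2^m * ∑ k ∈ B, (c k)^2) := by
      intro i hi
      rw [Finset.sum_ite_eq B i _, if_pos hi, sq]
    rw [Finset.sum_congr rfl this, ← Finset.sum_mul]
    ring
  have hE2 : ∑ i ∈ B, ∑ j ∈ B, ∑ k ∈ B, ∑ l ∈ B,
      (c i*c j*c k*c l) * (if i = k ∧ j = l then (2:ℝ)^m else 0)
      = 2^m * (∑ i ∈ B, (c i)^2)^2 := by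
    have inner : ∀ i ∈ B, ∀ j ∈ B, (∑ k ∈ B, ∑ l ∈ B,
        (c i*c j*c k*c l) * (if i = k ∧ j = l then (2:ℝ)^m else 0))
        = (c i)^2 * (c j)^2 * 2^m := by
      intro i hi j hj
      have hk : ∀ k ∈ B, (∑ l ∈ B,
          (c i*c j*c k*c l) * (if i = k ∧ j = l then (2:ℝ)^m else 0))
          = if i = k then ((c i * c k) * (c j)^2 * 2^m) else 0 := by
        intro k _
        have hl : ∀ l, (c i*c j*c k*c l) * (if i = k ∧ j = l then (2:ℝ)^m else 0)
            = if i = k then (if j = l then ((c i * c k) * 2^m) * (c j * c l) else 0) else 0 := by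
          intro l
          by_cases hik : i = k <;> by_cases hjl : j = l <;> simp [hik, hjl] <;> ring
        rw [Finset.sum_congr rfl (fun l _ => hl l)]
        by_cases hik : i = k
        · simp only [if_pos hik]
          rw [Finset.sum_ite_eq B j _, if_pos hj, sq]
          ring
        · simp [hik]
      rw [Finset.sum_congr rfl hk, Finset.sum_ite_eq B i _, if_pos hi, sq]
      ring
    rw [Finset.sum_congr rfl (fun i hi => Finset.sum_congr rfl (fun j hj => inner i hi j hj))]
    simp_rw [← Finset.sum_mul]
    rw [← Finset.sum_mul_sum]
    ring
  have hE3 : ∑ i ∈ B, ∑ j ∈ B, ∑ k ∈ B, ∑ l ∈ B,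
      (c i*c j*c k*c l) * (if i = l ∧ j = k then (2:ℝ)^m else 0)
      = 2^m * (∑ i ∈ B, (c i)^2)^2 := by
    have inner : ∀ i ∈ B, ∀ j ∈ B, (∑ k ∈ B, ∑ l ∈ B,
        (c i*c j*c k*c l) * (if i = l ∧ j = k then (2:ℝ)^m else 0))
        = (c i)^2 * (c j)^2 * 2^m := by
      intro i hi j hj
      have hk : ∀ k ∈ B, (∑ l ∈ B,
          (c i*c j*c k*c l) * (if i = l ∧ j = k then (2:ℝ)^m else 0))
          = if j = k then ((c j * c k) * (c i)^2 * 2^m) else 0 := by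
        intro k _
        have hl : ∀ l, (c i*c j*c k*c l) * (if i = l ∧ j = k then (2:ℝ)^m else 0)
            = if j = k then (if i = l then ((c j * c k) * 2^m) * (c i * c l) else 0) else 0 := by
          intro l
          by_cases hjk : j = k <;> by_cases hil : i = l <;> simp [hjk, hil] <;> ring
        rw [Finset.sum_congr rfl (fun l _ => hl l)]
        by_cases hjk : j = k
        · simp only [if_pos hjk]
          rw [Finset.sum_ite_eq B i _, if_pos hi, sq]
          ring
        · simp [hjk]
      rw [Finset.sum_congr rfl hk, Finset.sum_ite_eq B j _, if_pos hj, sq]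
      ring
    rw [Finset.sum_congr rfl (fun i hi => Finset.sum_congr rfl (fun j hj => inner i hi j hj))]
    simp_rw [← Finset.sum_mul]
    rw [← Finset.sum_mul_sum]
    ring
  calc ∑ i ∈ B, ∑ j ∈ B, ∑ k ∈ B, ∑ l ∈ B, (c i * c j * c k * c l) *
          ((if i = j ∧ k = l then (2:ℝ)^m else 0) + (if i = k ∧ j = l then (2:ℝ)^m else 0)
            + (if i = l ∧ j = k then (2:ℝ)^m else 0))
      = (∑ i ∈ B, ∑ j ∈ B, ∑ k ∈ B, ∑ l ∈ B,
          (c i*c j*c k*c l) * (if i = j ∧ k = l then (2:ℝ)^m else 0))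
        + (∑ i ∈ B, ∑ j ∈ B, ∑ k ∈ B, ∑ l ∈ B,
          (c i*c j*c k*c l) * (if i = k ∧ j = l then (2:ℝ)^m else 0))
        + (∑ i ∈ B, ∑ j ∈ B, ∑ k ∈ B, ∑ l ∈ B,
          (c i*c j*c k*c l) * (if i = l ∧ j = k then (2:ℝ)^m else 0)) := by
        simp_rw [mul_add, Finset.sum_add_distrib]
    _ ≤ 3 * 2^m * (∑ i ∈ B, (c i)^2)^2 := le_of_eq (by rw [hE1, hE2, hE3]; ring)

lemma khintchine {m : ℕ} (B : Finset (Fin m)) (c : Fin m → ℝ) (hc : ∀ i, 0 ≤ c i) :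
    Real.sqrt (∑ i ∈ B, (c i)^2) * 2^m
      ≤ Real.sqrt 3 * ∑ ε : Fin m → Bool, |∑ i ∈ B, c i * rr (ε i)| := by
  set W : (Fin m → Bool) → ℝ := fun ε => ∑ i ∈ B, c i * rr (ε i) with hW
  set σ : ℝ := ∑ i ∈ B, (c i)^2 with hσ
  set P : ℝ := (2:ℝ)^m with hPdef
  have hP : (0:ℝ) < P := by positivity
  set S1 : ℝ := ∑ ε : Fin m → Bool, |W ε| with hS1def
  set S3 : ℝ := ∑ ε : Fin m → Bool, |W ε|^3 with hS3def
  have hS1 : 0 ≤ S1 := Finset.sum_nonneg fun ε _ => abs_nonneg _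
  have hS3 : 0 ≤ S3 := Finset.sum_nonneg fun ε _ => pow_nonneg (abs_nonneg _) 3
  have hσ0 : 0 ≤ σ := Finset.sum_nonneg fun i _ => sq_nonneg _
  have hM2 : ∑ ε : Fin m → Bool, (W ε)^2 = P * σ := moment2 B c
  have hM4 : ∑ ε : Fin m → Bool, (W ε)^4 ≤ 3 * P * σ^2 := by
    have := moment4 B c hc
    calc ∑ ε : Fin m → Bool, (W ε)^4 ≤ 3 * 2^m * σ^2 := this
      _ = 3 * P * σ^2 := by rw [hPdef]
  -- CS1 : (P*σ)^2 ≤ S1 * S3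
  have hCS1 : (P * σ)^2 ≤ S1 * S3 := by
    have h := Finset.sum_mul_sq_le_sq_mul_sq Finset.univ
      (fun ε : Fin m → Bool => Real.sqrt |W ε|)
      (fun ε : Fin m → Bool => |W ε| * Real.sqrt |W ε|)
    have e1 : ∀ ε : Fin m → Bool, Real.sqrt |W ε| * (|W ε| * Real.sqrt |W ε|) = (W ε)^2 := by
      intro ε
      rw [show Real.sqrt |W ε| * (|W ε| * Real.sqrt |W ε|)
          = (Real.sqrt |W ε| * Real.sqrt |W ε|) * |W ε| by ring,
        Real.mul_self_sqrt (abs_nonneg _), ← abs_mul, ← sq, abs_of_nonneg (sq_nonneg (W ε))]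
    have e2 : ∀ ε : Fin m → Bool, (Real.sqrt |W ε|)^2 = |W ε| :=
      fun ε => Real.sq_sqrt (abs_nonneg _)
    have e3 : ∀ ε : Fin m → Bool, (|W ε| * Real.sqrt |W ε|)^2 = |W ε|^3 := by
      intro ε
      rw [mul_pow, Real.sq_sqrt (abs_nonneg _)]
      ring
    rw [Finset.sum_congr rfl (fun ε _ => e1 ε), Finset.sum_congr rfl (fun ε _ => e2 ε),
      Finset.sum_congr rfl (fun ε _ => e3 ε), hM2] at h
    exact h
  -- CS2 : S3^2 ≤ (P*σ) * (3*P*σ^2)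
  have hCS2 : S3^2 ≤ (P * σ) * (3 * P * σ^2) := by
    have h := Finset.sum_mul_sq_le_sq_mul_sq Finset.univ
      (fun ε : Fin m → Bool => |W ε|)
      (fun ε : Fin m → Bool => (W ε)^2)
    have e1 : ∀ ε : Fin m → Bool, |W ε| * (W ε)^2 = |W ε|^3 := by
      intro ε
      rw [← sq_abs (W ε)]
      ring
    have e2 : ∀ ε : Fin m → Bool, |W ε|^2 = (W ε)^2 := fun ε => sq_abs _
    have e4 : ∀ ε : Fin m → Bool, ((W ε)^2)^2 = (W ε)^4 := fun ε => by ring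
    rw [Finset.sum_congr rfl (fun ε _ => e1 ε), Finset.sum_congr rfl (fun ε _ => e2 ε),
      Finset.sum_congr rfl (fun ε _ => e4 ε), hM2] at h
    calc S3^2 ≤ (P*σ) * ∑ ε : Fin m → Bool, (W ε)^4 := h
      _ ≤ (P*σ) * (3*P*σ^2) := by
          apply mul_le_mul_of_nonneg_left hM4 (by positivity)
  -- combine: P^2 * σ ≤ 3 * S1^2
  have hkey : P^2 * σ ≤ 3 * S1^2 := by
    rcases eq_or_lt_of_le hσ0 with h0 | hσpos
    · rw [← h0]; nlinarith
    · have hmul : (P^2*σ) * (P^2*σ^3) ≤ (3*S1^2) * (P^2*σ^3) := by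
        have hsq : ((P*σ)^2)^2 ≤ (S1*S3)^2 := by
          apply pow_le_pow_left₀ (by positivity) hCS1
        have h2 : (S1*S3)^2 = S1^2 * S3^2 := by ring
        have h3 : S1^2 * S3^2 ≤ S1^2 * ((P*σ)*(3*P*σ^2)) :=
          mul_le_mul_of_nonneg_left hCS2 (sq_nonneg _)
        nlinarith [hsq, h3]
      exact le_of_mul_le_mul_right hmul (by positivity)
  have := Real.sqrt_le_sqrt hkey
  rw [Real.sqrt_mul (by positivity : (0:ℝ) ≤ P^2) σ,
    Real.sqrt_sq hP.le,
    Real.sqrt_mul (by norm_num : (0:ℝ) ≤ 3) (S1^2),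
    Real.sqrt_sq hS1] at this
  linarith

end MCAux

set_option maxHeartbeats 1000000 in
/-- There are `c₀, c₁ > 0` such that for all `n, N` with
`1 ≤ n ≤ c₀·N`, every (nonadaptive) randomized algorithm using `n` function values —
given by a finite probability space `(Ω, P)`, sample points `t ω : Fin n → Fin N`
and arbitrary maps `φ ω : ℝⁿ → ℝ` — has worst-case expected error on the unit ball
`B_∞^N(ℝ)` at least `c₁ · n^(-1/2)` for computing the mean `S_N f = (1/N) ∑ j, f j`:
any upper bound `b` for the expected errors over the unit ball satisfies
`b ≥ c₁ · n^(-1/2)`. -/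
theorem mc_scalar_lower :
    ∃ c₀ c₁ : ℝ, 0 < c₀ ∧ 0 < c₁ ∧
      ∀ (n N : ℕ), 1 ≤ n → (n : ℝ) ≤ c₀ * N →
        ∀ (Ω : Type) [Fintype Ω] (P : Ω → ℝ),
          (∀ ω, 0 ≤ P ω) → (∑ ω, P ω = 1) →
          ∀ (t : Ω → Fin n → Fin N) (φ : Ω → (Fin n → ℝ) → ℝ) (b : ℝ),
            (∀ f : Fin N → ℝ, (∀ j, |f j| ≤ 1) →
              ∑ ω, P ω * |(N : ℝ)⁻¹ * ∑ j, f j - φ ω (fun l => f (t ω l))| ≤ b) →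
            c₁ * (n : ℝ) ^ (-(1 / 2 : ℝ)) ≤ b := by
  refine ⟨1/4, 1/7, by norm_num, by norm_num, ?_⟩
  intro n N hn hnN Ω _ P hP hPsum t φ b hb
  have hm : 0 < 2*n := by omega
  set m := 2*n with hmdef
  have hNge : 4*n ≤ N := by
    have h4 : ((4*n : ℕ) : ℝ) ≤ (N:ℝ) := by push_cast; linarith
    exact_mod_cast h4
  have hN : 0 < N := by omega
  have hNr : (0:ℝ) < N := by exact_mod_cast hN
  have hnr : (0:ℝ) < n := by exact_mod_cast hn
  -- blocks
  set blk : Fin N → Fin m := fun j => ⟨j.1 % m, Nat.mod_lt _ hm⟩ with hblk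
  set s : Fin m → ℕ := fun i => (univ.filter fun j => blk j = i).card with hs
  -- lower bound on block sizes
  have hslow : ∀ i : Fin m, (N:ℝ)/(4*n) ≤ (s i : ℝ) := by
    intro i
    have hinj : N / m ≤ s i := by
      have : (univ : Finset (Fin (N/m))).card ≤ (univ.filter fun j => blk j = i).card := by
        apply Finset.card_le_card_of_injOn (fun q => (⟨q.1 * m + i.1, by
          have hq : q.1 < N / m := q.2
          have h1 : q.1 * m + m ≤ N := by
            have h3 : (q.1 + 1) * m ≤ (N/m) * m := Nat.mul_le_mul_right m hq
            have h2 : (N/m) * m ≤ N := Nat.div_mul_le_self N m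
            rw [Nat.succ_mul] at h3
            omega
          have h2 : i.1 < m := i.2
          omega⟩ : Fin N))
        · intro q _
          simp only [Finset.mem_coe, Finset.mem_filter, Finset.mem_univ, true_and]
          apply Fin.ext
          show (q.1 * m + i.1) % m = i.1
          rw [Nat.add_comm, Nat.add_mul_mod_self_right, Nat.mod_eq_of_lt i.2]
        · intro q _ q' _ hqq
          have : q.1 * m + i.1 = q'.1 * m + i.1 := congrArg Fin.val hqq
          have : q.1 * m = q'.1 * m := by omega
          exact Fin.ext (Nat.eq_of_mul_eq_mul_right hm this)
      simpa using this
    have hmod := Nat.div_add_mod N m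
    have hmodlt : N % m < m := Nat.mod_lt _ hm
    have hcast : (m:ℝ) * ((N/m : ℕ):ℝ) + ((N % m : ℕ):ℝ) = (N:ℝ) := by exact_mod_cast hmod
    have hmr : (0:ℝ) < m := by exact_mod_cast hm
    have h2m : (2*(m:ℝ)) ≤ N := by
      have : 2*m ≤ N := by omega
      exact_mod_cast this
    have hdiv : (N:ℝ)/(2*(m:ℝ)) ≤ ((N/m : ℕ):ℝ) := by
      rw [div_le_iff₀ (by positivity)]
      have hmodr : ((N % m : ℕ):ℝ) < m := by exact_mod_cast hmodlt
      nlinarith [hcast]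
    have hcast2 : ((N/m : ℕ):ℝ) ≤ (s i : ℝ) := by exact_mod_cast hinj
    have : (4:ℝ)*n = 2*(m:ℝ) := by push_cast [hmdef]; ring
    rw [this]
    linarith
  -- fiberwise sum
  have hsum_blk : ∀ F : Fin m → ℝ, ∑ j : Fin N, F (blk j) = ∑ i : Fin m, (s i : ℝ) * F i := by
    intro F
    rw [← Finset.sum_fiberwise' univ blk F]
    refine Finset.sum_congr rfl fun i _ => ?_
    rw [Finset.sum_const, hs, nsmul_eq_mul]
  -- the random inputs
  set fe : (Fin m → Bool) → Fin N → ℝ := fun ε j => rr (ε (blk j)) with hfe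
  have hball : ∀ ε : (Fin m → Bool), ∀ j, |fe ε j| ≤ 1 := fun ε j => rr_abs _
  -- per-omega lower bound
  have homega : ∀ ω : Ω, (2:ℝ)^m * ((1/7) * (1/Real.sqrt n))
      ≤ ∑ ε : Fin m → Bool, |(N:ℝ)⁻¹ * (∑ j, fe ε j) - φ ω (fun l => fe ε (t ω l))| := by
    intro ω
    classical
    set A : Finset (Fin m) := Finset.image (fun l => blk (t ω l)) Finset.univ with hA
    have hcardB : (n:ℝ) ≤ (Aᶜ.card : ℝ) := by
      have h1 : A.card ≤ n := le_trans Finset.card_image_le (by simp)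
      have h2 : Aᶜ.card = Fintype.card (Fin m) - A.card := Finset.card_compl A
      have : n ≤ Aᶜ.card := by
        rw [h2, Fintype.card_fin]
        omega
      exact_mod_cast this
    set g : (Fin m → Bool) → (Fin m → Bool) :=
      fun ε => fun i => if i ∈ A then ε i else !(ε i) with hgdef
    have hginv : Function.Involutive g := by
      intro ε; funext i
      by_cases h : i ∈ A <;> simp [hgdef, h]
    set W : (Fin m → Bool) → ℝ := fun ε => ∑ i ∈ Aᶜ, (s i : ℝ) * rr (ε i) with hWdef
    have hy : ∀ ε, φ ω (fun l => fe (g ε) (t ω l)) = φ ω (fun l => fe ε (t ω l)) := by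
      intro ε
      congr 1
      funext l
      have hmem : blk (t ω l) ∈ A := by
        rw [hA]; exact Finset.mem_image_of_mem _ (Finset.mem_univ l)
      show rr (g ε (blk (t ω l))) = rr (ε (blk (t ω l)))
      rw [hgdef]
      simp only [if_pos hmem]
    have hsplit : ∀ ε : Fin m → Bool,
        ∑ j, fe ε j = (∑ i ∈ A, (s i:ℝ) * rr (ε i)) + W ε := by
      intro ε
      rw [show (∑ j, fe ε j) = ∑ j : Fin N, (fun i => rr (ε i)) (blk j) from rfl,
        hsum_blk (fun i => rr (ε i)), ← Finset.sum_add_sum_compl A (fun i => (s i:ℝ) * rr (ε i))]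
    have hflip : ∀ ε : Fin m → Bool,
        ∑ j, fe (g ε) j = (∑ i ∈ A, (s i:ℝ) * rr (ε i)) - W ε := by
      intro ε
      rw [show (∑ j, fe (g ε) j) = ∑ j : Fin N, (fun i => rr (g ε i)) (blk j) from rfl,
        hsum_blk (fun i => rr (g ε i)),
        ← Finset.sum_add_sum_compl A (fun i => (s i:ℝ) * rr (g ε i))]
      have e1 : ∑ i ∈ A, (s i:ℝ) * rr (g ε i) = ∑ i ∈ A, (s i:ℝ) * rr (ε i) :=
        Finset.sum_congr rfl fun i hi => by rw [hgdef]; simp [if_pos hi]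
      have e2 : ∑ i ∈ Aᶜ, (s i:ℝ) * rr (g ε i) = - W ε := by
        rw [hWdef, ← Finset.sum_neg_distrib]
        refine Finset.sum_congr rfl fun i hi => ?_
        have : i ∉ A := Finset.mem_compl.mp hi
        rw [hgdef]
        simp only [if_neg this, rr_not]
        ring
      rw [e1, e2]
      ring
    -- pointwise symmetrization inequality
    have hpoint : ∀ ε : Fin m → Bool, 2 * (N:ℝ)⁻¹ * |W ε| ≤
        |(N:ℝ)⁻¹ * (∑ j, fe ε j) - φ ω (fun l => fe ε (t ω l))|
        + |(N:ℝ)⁻¹ * (∑ j, fe (g ε) j) - φ ω (fun l => fe (g ε) (t ω l))| := by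
      intro ε
      rw [hy ε]
      set a1 := (N:ℝ)⁻¹ * (∑ j, fe ε j) - φ ω (fun l => fe ε (t ω l)) with ha1
      set a2 := (N:ℝ)⁻¹ * (∑ j, fe (g ε) j) - φ ω (fun l => fe ε (t ω l)) with ha2
      have hdiff : a1 - a2 = (N:ℝ)⁻¹ * (2 * W ε) := by
        rw [ha1, ha2, hsplit ε, hflip ε]
        ring
      have h1 : |a1 - a2| ≤ |a1| + |a2| := abs_sub _ _
      have h2 : |a1 - a2| = 2 * (N:ℝ)⁻¹ * |W ε| := by
        rw [hdiff, abs_mul, abs_mul, abs_of_nonneg (by positivity : (0:ℝ) ≤ (N:ℝ)⁻¹),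
          abs_of_nonneg (by norm_num : (0:ℝ) ≤ (2:ℝ))]
        ring
      linarith
    -- sum over ε, using the flip equivalence
    set S : ℝ := ∑ ε : Fin m → Bool,
      |(N:ℝ)⁻¹ * (∑ j, fe ε j) - φ ω (fun l => fe ε (t ω l))| with hSdef
    have hflipsum : ∑ ε : Fin m → Bool,
        |(N:ℝ)⁻¹ * (∑ j, fe (g ε) j) - φ ω (fun l => fe (g ε) (t ω l))| = S := by
      rw [hSdef]
      exact Equiv.sum_comp (Function.Involutive.toPerm _ hginv)
        (fun ε => |(N:ℝ)⁻¹ * (∑ j, fe ε j) - φ ω (fun l => fe ε (t ω l))|)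
    have hsum2 : 2 * (N:ℝ)⁻¹ * (∑ ε : Fin m → Bool, |W ε|) ≤ 2 * S := by
      calc 2 * (N:ℝ)⁻¹ * (∑ ε : Fin m → Bool, |W ε|)
          = ∑ ε : Fin m → Bool, 2 * (N:ℝ)⁻¹ * |W ε| := by rw [Finset.mul_sum]
        _ ≤ ∑ ε : Fin m → Bool,
            (|(N:ℝ)⁻¹ * (∑ j, fe ε j) - φ ω (fun l => fe ε (t ω l))|
            + |(N:ℝ)⁻¹ * (∑ j, fe (g ε) j) - φ ω (fun l => fe (g ε) (t ω l))|) :=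
            Finset.sum_le_sum fun ε _ => hpoint ε
        _ = S + S := by rw [Finset.sum_add_distrib, hflipsum, hSdef]
        _ = 2 * S := by ring
    -- Khintchine lower bound for ∑ |W|
    have hkh := khintchine Aᶜ (fun i => (s i : ℝ)) (fun i => Nat.cast_nonneg _)
    have hsq : (n:ℝ) * ((N:ℝ)/(4*n))^2 ≤ ∑ i ∈ Aᶜ, ((s i:ℝ))^2 := by
      calc (n:ℝ) * ((N:ℝ)/(4*n))^2 ≤ (Aᶜ.card : ℝ) * ((N:ℝ)/(4*n))^2 := by
            apply mul_le_mul_of_nonneg_right hcardB (by positivity)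
        _ ≤ ∑ i ∈ Aᶜ, ((s i:ℝ))^2 := by
            rw [← nsmul_eq_mul]
            apply Finset.card_nsmul_le_sum
            intro i _
            exact pow_le_pow_left₀ (by positivity) (hslow i) 2
    have hsqrt : Real.sqrt ((n:ℝ) * ((N:ℝ)/(4*n))^2) = Real.sqrt n * ((N:ℝ)/(4*n)) := by
      rw [Real.sqrt_mul (Nat.cast_nonneg n), Real.sqrt_sq (by positivity)]
    have hkh2 : Real.sqrt n * ((N:ℝ)/(4*n)) * 2^m
        ≤ Real.sqrt 3 * ∑ ε : Fin m → Bool, |W ε| := by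
      calc Real.sqrt n * ((N:ℝ)/(4*n)) * 2^m
          = Real.sqrt ((n:ℝ) * ((N:ℝ)/(4*n))^2) * 2^m := by rw [hsqrt]
        _ ≤ Real.sqrt (∑ i ∈ Aᶜ, ((s i:ℝ))^2) * 2^m := by
            apply mul_le_mul_of_nonneg_right (Real.sqrt_le_sqrt hsq) (by positivity)
        _ ≤ Real.sqrt 3 * ∑ ε : Fin m → Bool, |W ε| := hkh
    -- final numeric assembly
    set sn := Real.sqrt n with hsn
    have hsnpos : 0 < sn := Real.sqrt_pos.mpr hnr
    have hsn2 : sn^2 = n := Real.sq_sqrt (Nat.cast_nonneg n)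
    have h3pos : (0:ℝ) < Real.sqrt 3 := by positivity
    have hsqrt3 : Real.sqrt 3 ≤ 7/4 := by
      have h := Real.sqrt_le_sqrt (by norm_num : (3:ℝ) ≤ (7/4)^2)
      rwa [Real.sqrt_sq (by norm_num : (0:ℝ) ≤ 7/4)] at h
    have hWnn : 0 ≤ ∑ ε : Fin m → Bool, |W ε| :=
      Finset.sum_nonneg fun ε _ => abs_nonneg _
    have hR : sn * ((N:ℝ)/(4*n)) * 2^m / Real.sqrt 3 ≤ ∑ ε : Fin m → Bool, |W ε| :=
      (div_le_iff₀ h3pos).mpr (by linarith [hkh2])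
    have hScmp : (N:ℝ)⁻¹ * (∑ ε : Fin m → Bool, |W ε|) ≤ S := by linarith [hsum2]
    have e1 : (N:ℝ)⁻¹ * (sn * ((N:ℝ)/(4*n)) * 2^m / Real.sqrt 3)
        = sn * 2^m / (4*n*Real.sqrt 3) := by
      field_simp
    have e2 : (2:ℝ)^m * ((1/7) * (1/sn)) ≤ sn * 2^m / (4*(n:ℝ)*Real.sqrt 3) := by
      rw [show (2:ℝ)^m * ((1/7) * (1/sn)) = 2^m/(7*sn) by field_simp]
      rw [div_le_div_iff₀ (by positivity) (by positivity)]
      rw [show sn * 2^m * (7*sn) = 7*(2:ℝ)^m*(sn^2) by ring, hsn2]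
      nlinarith [mul_le_mul_of_nonneg_left hsqrt3
        (by positivity : (0:ℝ) ≤ 4*(n:ℝ)*2^m)]
    calc (2:ℝ)^m * ((1/7) * (1/sn))
        ≤ sn * 2^m / (4*(n:ℝ)*Real.sqrt 3) := e2
      _ = (N:ℝ)⁻¹ * (sn * ((N:ℝ)/(4*n)) * 2^m / Real.sqrt 3) := e1.symm
      _ ≤ (N:ℝ)⁻¹ * (∑ ε : Fin m → Bool, |W ε|) := by
          apply mul_le_mul_of_nonneg_left hR (by positivity)
      _ ≤ S := hScmp
  -- averaging over epsilon
  have havg : ∑ ε : Fin m → Bool, ∑ ω, P ω *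
      |(N:ℝ)⁻¹ * (∑ j, fe ε j) - φ ω (fun l => fe ε (t ω l))| ≤ (2:ℝ)^m * b := by
    calc ∑ ε : Fin m → Bool, ∑ ω, P ω * |(N:ℝ)⁻¹ * (∑ j, fe ε j) - φ ω (fun l => fe ε (t ω l))|
        ≤ ∑ _ε : Fin m → Bool, b := Finset.sum_le_sum fun ε _ => hb (fe ε) (hball ε)
      _ = (2:ℝ)^m * b := by
          rw [Finset.sum_const, card_univ, Fintype.card_fun]
          simp [nsmul_eq_mul]
  have hswap : ∑ ω, P ω * ∑ ε : Fin m → Bool,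
      |(N:ℝ)⁻¹ * (∑ j, fe ε j) - φ ω (fun l => fe ε (t ω l))| ≤ (2:ℝ)^m * b := by
    rw [show (∑ ω, P ω * ∑ ε : Fin m → Bool,
        |(N:ℝ)⁻¹ * (∑ j, fe ε j) - φ ω (fun l => fe ε (t ω l))|)
        = ∑ ω, ∑ ε : Fin m → Bool, P ω *
          |(N:ℝ)⁻¹ * (∑ j, fe ε j) - φ ω (fun l => fe ε (t ω l))| by
      exact Finset.sum_congr rfl fun ω _ => Finset.mul_sum _ _ _]
    rw [Finset.sum_comm]
    exact havg
  have hlower : (2:ℝ)^m * ((1/7) * (1/Real.sqrt n)) ≤ (2:ℝ)^m * b := by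
    calc (2:ℝ)^m * ((1/7) * (1/Real.sqrt n))
        = ∑ ω, P ω * ((2:ℝ)^m * ((1/7) * (1/Real.sqrt n))) := by
          rw [← Finset.sum_mul, hPsum, one_mul]
      _ ≤ ∑ ω, P ω * ∑ ε : Fin m → Bool,
          |(N:ℝ)⁻¹ * (∑ j, fe ε j) - φ ω (fun l => fe ε (t ω l))| :=
          Finset.sum_le_sum fun ω _ => mul_le_mul_of_nonneg_left (homega ω) (hP ω)
      _ ≤ (2:ℝ)^m * b := hswap
  have h2m : (0:ℝ) < (2:ℝ)^m := by positivity
  have hfin : (1/7 : ℝ) * (1/Real.sqrt n) ≤ b := le_of_mul_le_mul_left hlower h2m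
  have hrpow : (n:ℝ) ^ (-(1/2:ℝ)) = 1/Real.sqrt n := by
    rw [Real.rpow_neg (Nat.cast_nonneg n), Real.sqrt_eq_rpow, one_div]
    norm_num
  rw [hrpow]
  exact hfin
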